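/- For every integer n ≥ 1 and every z ∈ ℂ with z ≠ 0, the functions P_n(z) = ψ_{2n}(z;1) + (1 + a_{2n−1})·ψ_{2n−1}(z;1) and χ_n(z) = −ψ_{2n}(z;1) + (1 − a_{2n−1})·ψ_{2n−1}(z;1) (which equal the Jacobi polynomial of the first kind in x = z + 1/z and (z − 1/z) times the Jacobi polynomial of the second kind, respectively) satisfy the derivative relation z·P_n′(z) = n·χ_n(z). -/

import Mathlib

open Finset

/-- Monic OPUC associated to a sequence of (real) Verblunsky parameters. -/
noncomputable def Phi (c : ℕ → ℝ) : ℕ → ℂ → ℂ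
  | 0, _ => 1
  | n + 1, z => z * Phi c n z - (c n : ℂ) * z ^ n * Phi c n z⁻¹

/-- CMV Laurent polynomials: ψ_{2m} z = z^m Φ_{2m}(1/z), ψ_{2m+1} z = z^{-m} Φ_{2m+1}(z). -/
noncomputable def psi (c : ℕ → ℝ) (n : ℕ) (z : ℂ) : ℂ :=
  if Even n then z ^ (n / 2) * Phi c n z⁻¹
  else z ^ (-((n / 2 : ℕ) : ℤ)) * Phi c n z

/-- Verblunsky parameters of the Jacobi OPUC. -/
noncomputable def jacobiA (α β : ℝ) (n : ℕ) : ℝ :=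
  -(α + 1 / 2 + (-1 : ℝ) ^ (n + 1) * (β + 1 / 2)) / (n + α + β + 2)

/-- Sieved Verblunsky parameters: a_n(N) = a_{k-1} if n = N k - 1 (k ≥ 1), 0 otherwise. -/
noncomputable def sievedA (α β : ℝ) (N n : ℕ) : ℝ :=
  if N ∣ (n + 1) then jacobiA α β ((n + 1) / N - 1) else 0

/-- The primitive N-th root of unity q = exp(2πi/N). -/
noncomputable def qN (N : ℕ) : ℂ := Complex.exp (2 * Real.pi * Complex.I / N)

/-- The coefficients A_k(z;N) of the Dunkl-type operator L(N). -/
noncomputable def Acoef (α β : ℝ) (N k : ℕ) (z : ℂ) : ℂ :=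
  if Even N then
    ((α : ℂ) + β + 1 + (-1 : ℂ) ^ k * ((α : ℂ) - β)) * z ^ 2 / (qN N ^ k - z ^ 2)
  else
    (((α : ℂ) + β + 1) * z ^ 2 +
        (if Even k then qN N ^ ((k : ℤ) / 2) else qN N ^ (((k : ℤ) - (N : ℤ)) / 2)) *
          ((α : ℂ) - β) * z) /
      (qN N ^ k - z ^ 2)

/-- B(z) = N((α+β+1) z^{2N} + (α-β) z^N)/(z^{2N} - 1). -/
noncomputable def Bfun (α β : ℝ) (N : ℕ) (z : ℂ) : ℂ :=
  (N : ℂ) * (((α : ℂ) + β + 1) * z ^ (2 * N) + ((α : ℂ) - β) * z ^ N) / (z ^ (2 * N) - 1)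

/-- The Dunkl-type operator L(N). -/
noncomputable def Lop (α β : ℝ) (N : ℕ) (f : ℂ → ℂ) : ℂ → ℂ := fun z =>
  z * deriv f z + ∑ k ∈ Finset.range N, Acoef α β N k z * (f (qN N ^ k / z) - f z)

/-- A function ℂ∖{0} → ℂ is a Laurent polynomial. -/
def IsLaurentPoly (f : ℂ → ℂ) : Prop :=
  ∃ (m : ℕ) (p : Polynomial ℂ), ∀ z : ℂ, z ≠ 0 → f z = Polynomial.eval z p / z ^ m

/-- Sieved Jacobi polynomial of the first kind, as a function of z (x = z + 1/z). -/
noncomputable def sievP (α β : ℝ) (N n : ℕ) (z : ℂ) : ℂ :=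
  psi (sievedA α β N) (2 * n) z
    + (1 + (sievedA α β N (2 * n - 1) : ℂ)) * psi (sievedA α β N) (2 * n - 1) z

/-- χ_n(z) = (z - 1/z) Q_{n-1}(x(z)), with Q the sieved Jacobi polynomial of 2nd kind. -/
noncomputable def sievChi (α β : ℝ) (N n : ℕ) (z : ℂ) : ℂ :=
  -psi (sievedA α β N) (2 * n) z
    + (1 - (sievedA α β N (2 * n - 1) : ℂ)) * psi (sievedA α β N) (2 * n - 1) z

lemma Phi_succ (c : ℕ → ℝ) (n : ℕ) (z : ℂ) :
    Phi c (n+1) z = z * Phi c n z - (c n : ℂ) * z ^ n * Phi c n z⁻¹ := rfl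

lemma Phi_one (c : ℕ → ℝ) (z : ℂ) : Phi c 1 z = z - (c 0 : ℂ) := by
  simp [Phi]

lemma Phi_diff (c : ℕ → ℝ) (n : ℕ) : ∀ z : ℂ, z ≠ 0 → DifferentiableAt ℂ (Phi c n) z := by
  induction n with
  | zero => intro z _; simp only [Phi]; exact differentiableAt_const 1
  | succ n ih =>
    intro z hz
    have hcomp : DifferentiableAt ℂ (fun w : ℂ => Phi c n w⁻¹) z :=
      DifferentiableAt.comp z (ih _ (inv_ne_zero hz)) (differentiableAt_inv hz)
    have : DifferentiableAt ℂ
        (fun w : ℂ => w * Phi c n w - (c n : ℂ) * w ^ n * Phi c n w⁻¹) z :=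
      (differentiableAt_id.mul (ih z hz)).sub
        (((differentiableAt_const _).mul (differentiableAt_pow n)).mul hcomp)
    exact this

lemma psi_diff (c : ℕ → ℝ) (k : ℕ) (z : ℂ) (hz : z ≠ 0) :
    DifferentiableAt ℂ (psi c k) z := by
  have hpsi : psi c k = fun z => if Even k then z ^ (k / 2) * Phi c k z⁻¹
      else z ^ (-((k / 2 : ℕ) : ℤ)) * Phi c k z := rfl
  rw [hpsi]
  by_cases h : Even k
  · simp only [if_pos h]
    exact (differentiableAt_pow _).mul
      (DifferentiableAt.comp z (Phi_diff c k _ (inv_ne_zero hz)) (differentiableAt_inv hz))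
  · simp only [if_neg h]
    exact (differentiableAt_zpow.mpr (Or.inl hz)).mul (Phi_diff c k z hz)

lemma psi_odd (c : ℕ → ℝ) (m : ℕ) (z : ℂ) :
    psi c (2*m+1) z = (z^m)⁻¹ * Phi c (2*m+1) z := by
  have h1 : ¬ Even (2*m+1) := by simp [Nat.even_iff]
  simp only [psi, if_neg h1, show (2*m+1)/2 = m from by omega, zpow_neg, zpow_natCast]

lemma psi_even (c : ℕ → ℝ) (m : ℕ) (z : ℂ) (hz : z ≠ 0) :
    psi c (2*m+2) z = z^m * Phi c (2*m+1) z⁻¹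
      - (c (2*m+1) : ℂ) * ((z^m)⁻¹ * Phi c (2*m+1) z) := by
  have h1 : Even (2*m+2) := ⟨m+1, by ring⟩
  simp only [psi, if_pos h1, show (2*m+2)/2 = m+1 from by omega]
  rw [show 2*m+2 = 2*m+1+1 from by omega, Phi_succ, inv_inv]
  simp only [inv_pow]
  field_simp
  ring

lemma Phi_two (c : ℕ → ℝ) (m : ℕ) (z : ℂ) (hz : z ≠ 0) :
    Phi c (2*m+3) z = (z^2 + (c (2*m+1) : ℂ)*(c (2*m+2) : ℂ)*z) * Phi c (2*m+1) z
      - ((c (2*m+1) : ℂ)*z^(2*m+2) + (c (2*m+2) : ℂ)*z^(2*m+1)) * Phi c (2*m+1) z⁻¹ := by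
  rw [show 2*m+3 = 2*m+2+1 from by omega, Phi_succ c (2*m+2) z,
      show 2*m+2 = 2*m+1+1 from by omega, Phi_succ c (2*m+1) z, Phi_succ c (2*m+1) z⁻¹,
      inv_inv]
  simp only [inv_pow]
  field_simp
  ring

noncomputable def Pf (α β : ℝ) (m : ℕ) : ℂ → ℂ := fun w =>
  psi (jacobiA α β) (2*m+2) w + (1 + (jacobiA α β (2*m+1) : ℂ)) * psi (jacobiA α β) (2*m+1) w

noncomputable def Xf (α β : ℝ) (m : ℕ) : ℂ → ℂ := fun w =>
  -psi (jacobiA α β) (2*m+2) w + (1 - (jacobiA α β (2*m+1) : ℂ)) * psi (jacobiA α β) (2*m+1) w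

lemma Pf_diff (α β : ℝ) (m : ℕ) (z : ℂ) (hz : z ≠ 0) :
    DifferentiableAt ℂ (Pf α β m) z :=
  (psi_diff _ _ z hz).add ((psi_diff _ _ z hz).const_mul _)

lemma Xf_diff (α β : ℝ) (m : ℕ) (z : ℂ) (hz : z ≠ 0) :
    DifferentiableAt ℂ (Xf α β m) z :=
  (psi_diff _ _ z hz).neg.add ((psi_diff _ _ z hz).const_mul _)

lemma Pf_eq (α β : ℝ) (m : ℕ) (z : ℂ) (hz : z ≠ 0) :
    Pf α β m z = (z^m)⁻¹ * Phi (jacobiA α β) (2*m+1) z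
      + z^m * Phi (jacobiA α β) (2*m+1) z⁻¹ := by
  unfold Pf
  rw [psi_odd, psi_even _ _ _ hz]
  ring

lemma Xf_eq (α β : ℝ) (m : ℕ) (z : ℂ) (hz : z ≠ 0) :
    Xf α β m z = (z^m)⁻¹ * Phi (jacobiA α β) (2*m+1) z
      - z^m * Phi (jacobiA α β) (2*m+1) z⁻¹ := by
  unfold Xf
  rw [psi_odd, psi_even _ _ _ hz]
  ring

lemma miniU (c : ℕ → ℝ) (m : ℕ) (z : ℂ) (hz : z ≠ 0) :
    (z^(m+1))⁻¹ * Phi c (2*m+3) z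
      = (z + (c (2*m+1) : ℂ)*(c (2*m+2) : ℂ)) * ((z^m)⁻¹ * Phi c (2*m+1) z)
        - ((c (2*m+1) : ℂ)*z + (c (2*m+2) : ℂ)) * (z^m * Phi c (2*m+1) z⁻¹) := by
  have hw : z^m ≠ 0 := pow_ne_zero m hz
  rw [Phi_two _ _ _ hz,
      show z^(2*m+2) = (z^m)^2 * z^2 from by ring,
      show z^(2*m+1) = (z^m)^2 * z from by ring,
      show z^(m+1) = z^m * z from by ring]
  generalize hg : z^m = w at hw ⊢
  have hz1 : z * z⁻¹ = 1 := mul_inv_cancel₀ hz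
  have hw1 : w * w⁻¹ = 1 := mul_inv_cancel₀ hw
  set a := ((c (2*m+1) : ℝ) : ℂ)
  set b := ((c (2*m+2) : ℝ) : ℂ)
  set X := Phi c (2*m+1) z
  set Y := Phi c (2*m+1) z⁻¹
  linear_combination (w⁻¹*a*b*X - w^2*w⁻¹*b*Y + z*w⁻¹*X - z*w^2*w⁻¹*a*Y) * hz1
    + (-(w*b*Y) - z*w*a*Y) * hw1

lemma miniV (c : ℕ → ℝ) (m : ℕ) (z : ℂ) (hz : z ≠ 0) :
    z^(m+1) * Phi c (2*m+3) z⁻¹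
      = (z⁻¹ + (c (2*m+1) : ℂ)*(c (2*m+2) : ℂ)) * (z^m * Phi c (2*m+1) z⁻¹)
        - ((c (2*m+1) : ℂ)*z⁻¹ + (c (2*m+2) : ℂ)) * ((z^m)⁻¹ * Phi c (2*m+1) z) := by
  have hw : z^m ≠ 0 := pow_ne_zero m hz
  rw [Phi_two _ _ _ (inv_ne_zero hz), inv_inv,
      show (z⁻¹)^(2*m+2) = ((z^m)⁻¹)^2 * (z⁻¹)^2 from by rw [← inv_pow]; ring,
      show (z⁻¹)^(2*m+1) = ((z^m)⁻¹)^2 * z⁻¹ from by rw [← inv_pow]; ring,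
      show z^(m+1) = z^m * z from by ring]
  generalize hg : z^m = w at hw ⊢
  have hz1 : z * z⁻¹ = 1 := mul_inv_cancel₀ hz
  have hw1 : w * w⁻¹ = 1 := mul_inv_cancel₀ hw
  set a := ((c (2*m+1) : ℝ) : ℂ)
  set b := ((c (2*m+2) : ℝ) : ℂ)
  set X := Phi c (2*m+1) z
  set Y := Phi c (2*m+1) z⁻¹
  linear_combination (w*a*b*Y - w*(w⁻¹)^2*b*X + z⁻¹*w*Y - z⁻¹*w*(w⁻¹)^2*a*X) * hz1
    + (-(w⁻¹*b*X) - z⁻¹*w⁻¹*a*X) * hw1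

lemma Pf_rec (α β : ℝ) (m : ℕ) (z : ℂ) (hz : z ≠ 0) :
    Pf α β (m+1) z = ((1 - (jacobiA α β (2*m+1) : ℂ))
        * ((z + z⁻¹ - 2*(jacobiA α β (2*m+2) : ℂ)) * Pf α β m z)
      + (1 + (jacobiA α β (2*m+1) : ℂ)) * ((z - z⁻¹) * Xf α β m z)) / 2 := by
  have hw : z^m ≠ 0 := pow_ne_zero m hz
  rw [Pf_eq _ _ _ _ hz, Pf_eq _ _ _ _ hz, Xf_eq _ _ _ _ hz,
    show 2*(m+1)+1 = 2*m+3 from by omega, miniU _ _ _ hz, miniV _ _ _ hz]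
  ring

lemma Xf_rec (α β : ℝ) (m : ℕ) (z : ℂ) (hz : z ≠ 0) :
    Xf α β (m+1) z = ((1 - (jacobiA α β (2*m+1) : ℂ)) * ((z - z⁻¹) * Pf α β m z)
      + (1 + (jacobiA α β (2*m+1) : ℂ))
        * ((z + z⁻¹ + 2*(jacobiA α β (2*m+2) : ℂ)) * Xf α β m z)) / 2 := by
  have hw : z^m ≠ 0 := pow_ne_zero m hz
  rw [Xf_eq _ _ _ _ hz, Pf_eq _ _ _ _ hz, Xf_eq _ _ _ _ hz,
    show 2*(m+1)+1 = 2*m+3 from by omega, miniU _ _ _ hz, miniV _ _ _ hz]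
  ring

lemma ha_real (α β : ℝ) (hα : -1 < α) (hβ : -1 < β) (m : ℕ) :
    jacobiA α β (2*m+1) * (2*(m:ℝ)+3+α+β) = -(α+β+1) := by
  have hm : (0:ℝ) ≤ (m:ℝ) := Nat.cast_nonneg m
  have hd : ((2*m+1 : ℕ):ℝ) + α + β + 2 ≠ 0 := by push_cast; nlinarith
  have he : (-1:ℝ)^(2*m+1+1) = 1 := Even.neg_one_pow ⟨m+1, by ring⟩
  unfold jacobiA
  rw [he, div_mul_eq_mul_div, div_eq_iff hd]
  push_cast
  ring

lemma hb_real (α β : ℝ) (hα : -1 < α) (hβ : -1 < β) (m : ℕ) :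
    jacobiA α β (2*m+2) * (2*(m:ℝ)+4+α+β) = -(α-β) := by
  have hm : (0:ℝ) ≤ (m:ℝ) := Nat.cast_nonneg m
  have hd : ((2*m+2 : ℕ):ℝ) + α + β + 2 ≠ 0 := by push_cast; nlinarith
  have he : (-1:ℝ)^(2*m+2+1) = -1 := Odd.neg_one_pow ⟨m+1, by ring⟩
  unfold jacobiA
  rw [he, div_mul_eq_mul_div, div_eq_iff hd]
  push_cast
  ring

lemma hb0_real (α β : ℝ) (hα : -1 < α) (hβ : -1 < β) :
    jacobiA α β 0 * (α+β+2) = -(α-β) := by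
  have hd : ((0 : ℕ):ℝ) + α + β + 2 ≠ 0 := by push_cast; nlinarith
  have he : (-1:ℝ)^(0+1) = -1 := by norm_num
  unfold jacobiA
  rw [he, div_mul_eq_mul_div, div_eq_iff hd]
  push_cast
  ring

lemma step_G_alg (A1 A2 N z Pm Xm p' x' Xn a b : ℂ) (hz : z ≠ 0)
    (ha : a*(2*N+A1) = -A1) (hab : b*(2*N+1+a) = -(1+a)*A2)
    (hG : z * p' = N * Xm)
    (hH : (1-z^2)*(z*x') = 2*(A1*z^2+A2*z)*Xm + (1-z^2)*((N+A1)*Pm + A1*Xm))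
    (hXn : 2*z*Xn = (1-a)*(z^2-1)*Pm + (1+a)*(z^2+1+2*b*z)*Xm) :
    z * (((1-a) * ((1 + -(z^2)⁻¹) * Pm + (z + z⁻¹ - 2*b) * p')
        + (1+a) * ((1 - -(z^2)⁻¹) * Xm + (z - z⁻¹) * x')) / 2) = (N+1) * Xn := by
  have h2 : (2:ℂ)*z^2 ≠ 0 := by
    simp [hz]
  apply mul_left_cancel₀ h2
  have e1 : 2*z^2 * (z * (((1-a) * ((1 + -(z^2)⁻¹) * Pm + (z + z⁻¹ - 2*b) * p')
        + (1+a) * ((1 - -(z^2)⁻¹) * Xm + (z - z⁻¹) * x')) / 2))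
      = (1-a)*((z^3-z)*Pm) + (1-a)*(z^4+z^2-2*b*z^3)*p'
        + (1+a)*((z^3+z)*Xm) + (1+a)*(z^4-z^2)*x' := by
    field_simp
    ring
  rw [e1]
  linear_combination (1-a)*(z^3+z-2*b*z^2)*hG - (1+a)*z*hH - z*(N+1)*hXn
    + ((z^3-z)*Pm - (z^3+z)*Xm)*ha - 2*z^2*Xm*hab

lemma step_H_alg (A1 A2 N z Pm Xm p' x' Pn Xn a b : ℂ) (hz : z ≠ 0)
    (ha : a*(2*N+A1) = -A1) (hb : b*(2*N+1+A1) = -A2) (hab : b*(2*N+1+a) = -(1+a)*A2)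
    (hG : z * p' = N * Xm)
    (hH : (1-z^2)*(z*x') = 2*(A1*z^2+A2*z)*Xm + (1-z^2)*((N+A1)*Pm + A1*Xm))
    (hPn : 2*z*Pn = (1-a)*(z^2+1-2*b*z)*Pm + (1+a)*(z^2-1)*Xm)
    (hXn : 2*z*Xn = (1-a)*(z^2-1)*Pm + (1+a)*(z^2+1+2*b*z)*Xm) :
    (1-z^2) * (z * (((1-a) * ((1 - -(z^2)⁻¹) * Pm + (z - z⁻¹) * p')
        + (1+a) * ((1 + -(z^2)⁻¹) * Xm + (z + z⁻¹ + 2*b) * x')) / 2))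
      = 2*(A1*z^2+A2*z)*Xn + (1-z^2)*((N+1+A1)*Pn + A1*Xn) := by
  have h2 : (2:ℂ)*z^2 ≠ 0 := by
    simp [hz]
  apply mul_left_cancel₀ h2
  have e1 : 2*z^2 * ((1-z^2) * (z * (((1-a) * ((1 - -(z^2)⁻¹) * Pm + (z - z⁻¹) * p')
        + (1+a) * ((1 + -(z^2)⁻¹) * Xm + (z + z⁻¹ + 2*b) * x')) / 2)))
      = (1-z^2)*((1-a)*((z^3+z)*Pm) + (1-a)*(z^4-z^2)*p'
        + (1+a)*((z^3-z)*Xm) + (1+a)*(z^4+z^2+2*b*z^3)*x') := by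
    field_simp
    ring
  rw [e1]
  linear_combination (1-a)*(1-z^2)*(z^3-z)*hG + (1+a)*(z^3+z+2*b*z^2)*hH
    - z*(2*(A1*z^2+A2*z)+(1-z^2)*A1)*hXn - z*(1-z^2)*(N+1+A1)*hPn
    + (Pm*(1-z^2)*z*((z^2+1)+4*b*z) + Xm*z*(1-z^2)^2)*ha
    + (Pm*(1-z^2)*z*2*z)*hab + (Pm*(1-z^2)*z*(-4*a*z))*hb

lemma base_H_alg (A1 A2 c0 z : ℂ) (hz : z ≠ 0) (hc0 : c0*(A1+1) = -A2) :
    (1-z^2)*(z*(1 - -(z^2)⁻¹)) = 2*(A1*z^2+A2*z)*(z-z⁻¹)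
      + (1-z^2)*((1+A1)*(z+z⁻¹-2*c0) + A1*(z-z⁻¹)) := by
  apply mul_left_cancel₀ hz
  have e1 : z*((1-z^2)*(z*(1 - -(z^2)⁻¹))) = (1-z^2)*(z^2+1) := by
    field_simp
    ring
  have e2 : z*(2*(A1*z^2+A2*z)*(z-z⁻¹) + (1-z^2)*((1+A1)*(z+z⁻¹-2*c0) + A1*(z-z⁻¹)))
      = 2*(A1*z^2+A2*z)*(z^2-1) + (1-z^2)*((1+A1)*(z^2+1-2*c0*z) + A1*(z^2-1)) := by
    field_simp
  rw [e1, e2]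
  linear_combination (1-z^2)*2*z*hc0


open Topology Filter

lemma main_ind (α β : ℝ) (hα : -1 < α) (hβ : -1 < β) (m : ℕ) :
    (∀ z : ℂ, z ≠ 0 → z * deriv (Pf α β m) z = ((m:ℂ)+1) * Xf α β m z)
    ∧ (∀ z : ℂ, z ≠ 0 → (1-z^2) * (z * deriv (Xf α β m) z)
        = 2*(((α:ℂ)+β+1)*z^2 + ((α:ℂ)-β)*z) * Xf α β m z
          + (1-z^2) * ((((m:ℂ)+1) + ((α:ℂ)+β+1)) * Pf α β m z
            + ((α:ℂ)+β+1) * Xf α β m z)) := by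
  induction m with
  | zero =>
    have hc0 : (jacobiA α β 0 : ℂ) * (((α:ℂ)+β+1)+1) = -((α:ℂ)-β) := by
      have h := hb0_real α β hα hβ
      have h2 := congrArg (fun t : ℝ => (t:ℂ)) h
      push_cast at h2
      linear_combination h2
    constructor <;> intro z hz
    · have hev : ∀ᶠ w in 𝓝 z, w ≠ 0 := eventually_ne_nhds hz
      have hP0 : Pf α β 0 =ᶠ[𝓝 z] fun w => w + w⁻¹ - 2*(jacobiA α β 0 : ℂ) := by
        filter_upwards [hev] with w hw
        rw [Pf_eq α β 0 w hw, show (2*0+1:ℕ) = 1 from by norm_num, Phi_one, Phi_one]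
        simp only [pow_zero, inv_one]
        ring
      have hd : HasDerivAt (fun w : ℂ => w + w⁻¹ - 2*(jacobiA α β 0 : ℂ)) (1 + -(z^2)⁻¹) z :=
        ((hasDerivAt_id z).add (hasDerivAt_inv hz)).sub_const _
      rw [hP0.deriv_eq, hd.deriv]
      have hX0 : Xf α β 0 z = z - z⁻¹ := by
        rw [Xf_eq α β 0 z hz, show (2*0+1:ℕ) = 1 from by norm_num, Phi_one, Phi_one]
        simp only [pow_zero, inv_one]
        ring
      rw [hX0]
      have hz1 : z * z⁻¹ = 1 := mul_inv_cancel₀ hz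
      push_cast
      linear_combination (-z⁻¹) * hz1
    · have hev : ∀ᶠ w in 𝓝 z, w ≠ 0 := eventually_ne_nhds hz
      have hX0 : Xf α β 0 =ᶠ[𝓝 z] fun w => w - w⁻¹ := by
        filter_upwards [hev] with w hw
        rw [Xf_eq α β 0 w hw, show (2*0+1:ℕ) = 1 from by norm_num, Phi_one, Phi_one]
        simp only [pow_zero, inv_one]
        ring
      have hd : HasDerivAt (fun w : ℂ => w - w⁻¹) (1 - -(z^2)⁻¹) z :=
        (hasDerivAt_id z).sub (hasDerivAt_inv hz)
      rw [hX0.deriv_eq, hd.deriv]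
      have hP0 : Pf α β 0 z = z + z⁻¹ - 2*(jacobiA α β 0 : ℂ) := by
        rw [Pf_eq α β 0 z hz, show (2*0+1:ℕ) = 1 from by norm_num, Phi_one, Phi_one]
        simp only [pow_zero, inv_one]
        ring
      have hX0' : Xf α β 0 z = z - z⁻¹ := by
        rw [Xf_eq α β 0 z hz, show (2*0+1:ℕ) = 1 from by norm_num, Phi_one, Phi_one]
        simp only [pow_zero, inv_one]
        ring
      rw [hP0, hX0']
      have hbH := base_H_alg ((α:ℂ)+β+1) ((α:ℂ)-β) (jacobiA α β 0 : ℂ) z hz hc0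
      push_cast
      linear_combination hbH
  | succ m ih =>
    obtain ⟨ihG, ihH⟩ := ih
    have hmR : (0:ℝ) ≤ (m:ℝ) := Nat.cast_nonneg m
    have hD1 : (2*(m:ℝ)+3+α+β) ≠ 0 := by nlinarith
    have hD2 : (2*(m:ℝ)+4+α+β) ≠ 0 := by nlinarith
    have hD1c : (2*((m:ℂ)+1)+((α:ℂ)+β+1)) ≠ 0 := by
      have he : ((2*(m:ℝ)+3+α+β : ℝ) : ℂ) = 2*((m:ℂ)+1)+((α:ℂ)+β+1) := by push_cast; ring
      rw [← he]
      exact Complex.ofReal_ne_zero.mpr hD1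
    have hD2c : (2*((m:ℂ)+1)+1+((α:ℂ)+β+1)) ≠ 0 := by
      have he : ((2*(m:ℝ)+4+α+β : ℝ) : ℂ) = 2*((m:ℂ)+1)+1+((α:ℂ)+β+1) := by push_cast; ring
      rw [← he]
      exact Complex.ofReal_ne_zero.mpr hD2
    have ha : (jacobiA α β (2*m+1) : ℂ) * (2*((m:ℂ)+1)+((α:ℂ)+β+1)) = -((α:ℂ)+β+1) := by
      have h := ha_real α β hα hβ m
      have h2 := congrArg (fun t : ℝ => (t:ℂ)) h
      push_cast at h2
      linear_combination h2
    have hb : (jacobiA α β (2*m+2) : ℂ) * (2*((m:ℂ)+1)+1+((α:ℂ)+β+1)) = -((α:ℂ)-β) := by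
      have h := hb_real α β hα hβ m
      have h2 := congrArg (fun t : ℝ => (t:ℂ)) h
      push_cast at h2
      linear_combination h2
    have hab : (jacobiA α β (2*m+2) : ℂ) * (2*((m:ℂ)+1)+1+(jacobiA α β (2*m+1) : ℂ))
        = -(1+(jacobiA α β (2*m+1) : ℂ))*((α:ℂ)-β) := by
      have ea : (jacobiA α β (2*m+1) : ℂ) = -((α:ℂ)+β+1)/(2*((m:ℂ)+1)+((α:ℂ)+β+1)) := by
        rw [eq_div_iff hD1c]; linear_combination ha
      have eb : (jacobiA α β (2*m+2) : ℂ) = -((α:ℂ)-β)/(2*((m:ℂ)+1)+1+((α:ℂ)+β+1)) := by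
        rw [eq_div_iff hD2c]; linear_combination hb
      rw [ea, eb]
      field_simp
      ring
    constructor <;> intro z hz
    · have hev : ∀ᶠ w in 𝓝 z, w ≠ 0 := eventually_ne_nhds hz
      have hPd : HasDerivAt (Pf α β m) (deriv (Pf α β m) z) z := (Pf_diff α β m z hz).hasDerivAt
      have hXd : HasDerivAt (Xf α β m) (deriv (Xf α β m) z) z := (Xf_diff α β m z hz).hasDerivAt
      have hPev : Pf α β (m+1) =ᶠ[𝓝 z] fun w =>
          ((1 - (jacobiA α β (2*m+1) : ℂ))
            * ((w + w⁻¹ - 2*(jacobiA α β (2*m+2) : ℂ)) * Pf α β m w)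
          + (1 + (jacobiA α β (2*m+1) : ℂ)) * ((w - w⁻¹) * Xf α β m w)) / 2 := by
        filter_upwards [hev] with w hw
        exact Pf_rec α β m w hw
      have hd : HasDerivAt (fun w : ℂ =>
          ((1 - (jacobiA α β (2*m+1) : ℂ))
            * ((w + w⁻¹ - 2*(jacobiA α β (2*m+2) : ℂ)) * Pf α β m w)
          + (1 + (jacobiA α β (2*m+1) : ℂ)) * ((w - w⁻¹) * Xf α β m w)) / 2)
          (((1 - (jacobiA α β (2*m+1) : ℂ))
            * ((1 + -(z^2)⁻¹) * Pf α β m z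
              + (z + z⁻¹ - 2*(jacobiA α β (2*m+2) : ℂ)) * deriv (Pf α β m) z)
          + (1 + (jacobiA α β (2*m+1) : ℂ))
            * ((1 - -(z^2)⁻¹) * Xf α β m z + (z - z⁻¹) * deriv (Xf α β m) z)) / 2) z := by
        exact (((((hasDerivAt_id z).add (hasDerivAt_inv hz)).sub_const _).mul hPd).const_mul _
          |>.add ((((hasDerivAt_id z).sub (hasDerivAt_inv hz)).mul hXd).const_mul _)).div_const _
      rw [hPev.deriv_eq, hd.deriv]
      have hz1 : z * z⁻¹ = 1 := mul_inv_cancel₀ hz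
      have hXn : 2*z*Xf α β (m+1) z
          = (1-(jacobiA α β (2*m+1) : ℂ))*(z^2-1)*Pf α β m z
            + (1+(jacobiA α β (2*m+1) : ℂ))*(z^2+1+2*(jacobiA α β (2*m+2) : ℂ)*z)*Xf α β m z := by
        rw [Xf_rec α β m z hz]
        linear_combination (-(1-(jacobiA α β (2*m+1) : ℂ))*Pf α β m z
          + (1+(jacobiA α β (2*m+1) : ℂ))*Xf α β m z) * hz1
      have hstep := step_G_alg ((α:ℂ)+β+1) ((α:ℂ)-β) ((m:ℂ)+1) z (Pf α β m z) (Xf α β m z)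
        (deriv (Pf α β m) z) (deriv (Xf α β m) z) (Xf α β (m+1) z)
        (jacobiA α β (2*m+1) : ℂ) (jacobiA α β (2*m+2) : ℂ) hz ha hab
        (ihG z hz) (ihH z hz) hXn
      push_cast
      linear_combination hstep
    · have hev : ∀ᶠ w in 𝓝 z, w ≠ 0 := eventually_ne_nhds hz
      have hPd : HasDerivAt (Pf α β m) (deriv (Pf α β m) z) z := (Pf_diff α β m z hz).hasDerivAt
      have hXd : HasDerivAt (Xf α β m) (deriv (Xf α β m) z) z := (Xf_diff α β m z hz).hasDerivAt
      have hXev : Xf α β (m+1) =ᶠ[𝓝 z] fun w =>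
          ((1 - (jacobiA α β (2*m+1) : ℂ)) * ((w - w⁻¹) * Pf α β m w)
          + (1 + (jacobiA α β (2*m+1) : ℂ))
            * ((w + w⁻¹ + 2*(jacobiA α β (2*m+2) : ℂ)) * Xf α β m w)) / 2 := by
        filter_upwards [hev] with w hw
        exact Xf_rec α β m w hw
      have hd : HasDerivAt (fun w : ℂ =>
          ((1 - (jacobiA α β (2*m+1) : ℂ)) * ((w - w⁻¹) * Pf α β m w)
          + (1 + (jacobiA α β (2*m+1) : ℂ))
            * ((w + w⁻¹ + 2*(jacobiA α β (2*m+2) : ℂ)) * Xf α β m w)) / 2)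
          (((1 - (jacobiA α β (2*m+1) : ℂ))
            * ((1 - -(z^2)⁻¹) * Pf α β m z + (z - z⁻¹) * deriv (Pf α β m) z)
          + (1 + (jacobiA α β (2*m+1) : ℂ))
            * ((1 + -(z^2)⁻¹) * Xf α β m z
              + (z + z⁻¹ + 2*(jacobiA α β (2*m+2) : ℂ)) * deriv (Xf α β m) z)) / 2) z := by
        exact ((((hasDerivAt_id z).sub (hasDerivAt_inv hz)).mul hPd).const_mul _
          |>.add (((((hasDerivAt_id z).add (hasDerivAt_inv hz)).add_const _).mul hXd).const_mul _)).div_const _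
      rw [hXev.deriv_eq, hd.deriv]
      have hz1 : z * z⁻¹ = 1 := mul_inv_cancel₀ hz
      have hXn : 2*z*Xf α β (m+1) z
          = (1-(jacobiA α β (2*m+1) : ℂ))*(z^2-1)*Pf α β m z
            + (1+(jacobiA α β (2*m+1) : ℂ))*(z^2+1+2*(jacobiA α β (2*m+2) : ℂ)*z)*Xf α β m z := by
        rw [Xf_rec α β m z hz]
        linear_combination (-(1-(jacobiA α β (2*m+1) : ℂ))*Pf α β m z
          + (1+(jacobiA α β (2*m+1) : ℂ))*Xf α β m z) * hz1
      have hPn : 2*z*Pf α β (m+1) z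
          = (1-(jacobiA α β (2*m+1) : ℂ))*(z^2+1-2*(jacobiA α β (2*m+2) : ℂ)*z)*Pf α β m z
            + (1+(jacobiA α β (2*m+1) : ℂ))*(z^2-1)*Xf α β m z := by
        rw [Pf_rec α β m z hz]
        linear_combination ((1-(jacobiA α β (2*m+1) : ℂ))*Pf α β m z
          - (1+(jacobiA α β (2*m+1) : ℂ))*Xf α β m z) * hz1
      have hstep := step_H_alg ((α:ℂ)+β+1) ((α:ℂ)-β) ((m:ℂ)+1) z (Pf α β m z) (Xf α β m z)
        (deriv (Pf α β m) z) (deriv (Xf α β m) z) (Pf α β (m+1) z) (Xf α β (m+1) z)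
        (jacobiA α β (2*m+1) : ℂ) (jacobiA α β (2*m+2) : ℂ) hz ha hb hab
        (ihG z hz) (ihH z hz) hPn hXn
      push_cast
      linear_combination hstep

/-- the derivative relation z P_n'(z) = n χ_n(z) between the Jacobi
polynomials of the first kind and (z - 1/z) times those of the second kind. -/
theorem stmt_19 (α β : ℝ) (hα : -1 < α) (hβ : -1 < β) (n : ℕ) (hn : 1 ≤ n)
    (z : ℂ) (hz : z ≠ 0) :
    z * deriv (fun w => psi (jacobiA α β) (2 * n) w
        + (1 + (jacobiA α β (2 * n - 1) : ℂ)) * psi (jacobiA α β) (2 * n - 1) w) z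
      = (n : ℂ) * (-psi (jacobiA α β) (2 * n) z
          + (1 - (jacobiA α β (2 * n - 1) : ℂ)) * psi (jacobiA α β) (2 * n - 1) z) := by
  obtain ⟨m, rfl⟩ : ∃ m, n = m + 1 := ⟨n-1, by omega⟩
  rw [show 2*(m+1)-1 = 2*m+1 from by omega, show 2*(m+1) = 2*m+2 from by omega]
  have hfun : (fun w => psi (jacobiA α β) (2*m+2) w
      + (1 + (jacobiA α β (2*m+1) : ℂ)) * psi (jacobiA α β) (2*m+1) w) = Pf α β m := rfl
  rw [hfun]
  have h := (main_ind α β hα hβ m).1 z hz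
  rw [h]
  have hXf : Xf α β m z = -psi (jacobiA α β) (2*m+2) z
      + (1 - (jacobiA α β (2*m+1) : ℂ)) * psi (jacobiA α β) (2*m+1) z := rfl
  rw [← hXf]
  push_cast
  ring
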